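/- (Scheduling lemma.) Let T be a type, let p be a transitive and irreflexive binary relation on T (a strict partial order), let G be a subset of T, and let ℓ be a binary relation on T that holds only between elements of G, is transitive and irreflexive, is total on G (for distinct a, b ∈ G, either ℓ a b or ℓ b a), and extends the restriction of p to G (for all a, b ∈ G, p a b implies ℓ a b). Then there exists a strict linear order < on T such that p a b implies a < b and ℓ a b implies a < b for all a, b ∈ T. -/

import Mathlib

/-- Scheduling lemma. Given a strict partial order `p` on `T`, a
subset `G` of `T`, and a relation `l` holding only between elements of `G`
which is a strict linear order on `G` extending the restriction of `p` to `G`,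
there is a strict linear order on `T` extending both `p` and `l`. -/
theorem stmt_9 {T : Type*} (p : T → T → Prop) (G : Set T) (l : T → T → Prop)
    (hpTrans : ∀ a b c, p a b → p b c → p a c)
    (hpIrrefl : ∀ a, ¬ p a a)
    (hlDom : ∀ a b, l a b → a ∈ G ∧ b ∈ G)
    (hlTrans : ∀ a b c, l a b → l b c → l a c)
    (hlIrrefl : ∀ a, ¬ l a a)
    (hlTotal : ∀ a b, a ∈ G → b ∈ G → a ≠ b → l a b ∨ l b a)
    (hlExt : ∀ a b, a ∈ G → b ∈ G → p a b → l a b) :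
    ∃ lt : T → T → Prop,
      (∀ a, ¬ lt a a) ∧ (∀ a b c, lt a b → lt b c → lt a c) ∧
      (∀ a b, a ≠ b → lt a b ∨ lt b a) ∧
      (∀ a b, p a b → lt a b) ∧ (∀ a b, l a b → lt a b) := by
  classical
  set q : T → T → Prop := fun a b => p a b ∨ l a b with hq
  -- normal form relation: p, l, p;l, l;p, or p;l;p
  set R : T → T → Prop := fun a b =>
    p a b ∨ l a b ∨ (∃ x, p a x ∧ l x b) ∨ (∃ y, l a y ∧ p y b) ∨
      (∃ x y, p a x ∧ l x y ∧ p y b) with hR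
  have hRq : ∀ a b, q a b → R a b := by
    intro a b h
    rcases h with h | h
    · exact Or.inl h
    · exact Or.inr (Or.inl h)
  -- key: composing l with p-steps in between stays l
  have hlp : ∀ x y z, l x y → p y z → z ∈ G → l x z := by
    intro x y z h1 h2 hz
    exact hlTrans x y z h1 (hlExt y z (hlDom x y h1).2 hz h2)
  have hpl : ∀ x y z, x ∈ G → p x y → l y z → l x z := by
    intro x y z hx h1 h2
    exact hlTrans x y z (hlExt x y hx (hlDom y z h2).1 h1) h2
  have hRtrans : ∀ a b c, R a b → R b c → R a c := by
    intro a b c hab hbc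
    rcases hab with h1 | h1 | ⟨x, hx1, hx2⟩ | ⟨y, hy1, hy2⟩ | ⟨x, y, hx, hxy, hy⟩ <;>
    rcases hbc with h2 | h2 | ⟨u, hu1, hu2⟩ | ⟨v, hv1, hv2⟩ | ⟨u, v, hu, huv, hv⟩
    -- first: p a b
    · exact Or.inl (hpTrans a b c h1 h2)
    · exact Or.inr (Or.inr (Or.inl ⟨b, h1, h2⟩))
    · exact Or.inr (Or.inr (Or.inl ⟨u, hpTrans a b u h1 hu1, hu2⟩))
    · exact Or.inr (Or.inr (Or.inr (Or.inr ⟨b, v, h1, hv1, hv2⟩)))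
    · exact Or.inr (Or.inr (Or.inr (Or.inr ⟨u, v, hpTrans a b u h1 hu, huv, hv⟩)))
    -- second: l a b
    · exact Or.inr (Or.inr (Or.inr (Or.inl ⟨b, h1, h2⟩)))
    · exact Or.inr (Or.inl (hlTrans a b c h1 h2))
    · exact Or.inr (Or.inl (hlTrans a u c (hlp a b u h1 hu1 (hlDom u c hu2).1) hu2))
    · exact Or.inr (Or.inr (Or.inr (Or.inl ⟨v, hlTrans a b v h1 hv1, hv2⟩)))
    · exact Or.inr (Or.inr (Or.inr (Or.inl
        ⟨v, hlTrans a u v (hlp a b u h1 hu (hlDom u v huv).1) huv, hv⟩)))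
    -- third: p a x, l x b
    · exact Or.inr (Or.inr (Or.inr (Or.inr ⟨x, b, hx1, hx2, h2⟩)))
    · exact Or.inr (Or.inr (Or.inl ⟨x, hx1, hlTrans x b c hx2 h2⟩))
    · exact Or.inr (Or.inr (Or.inl
        ⟨x, hx1, hlTrans x u c (hlp x b u hx2 hu1 (hlDom u c hu2).1) hu2⟩))
    · exact Or.inr (Or.inr (Or.inr (Or.inr ⟨x, v, hx1, hlTrans x b v hx2 hv1, hv2⟩)))
    · exact Or.inr (Or.inr (Or.inr (Or.inr
        ⟨x, v, hx1, hlTrans x u v (hlp x b u hx2 hu (hlDom u v huv).1) huv, hv⟩)))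
    -- fourth: l a y, p y b
    · exact Or.inr (Or.inr (Or.inr (Or.inl ⟨y, hy1, hpTrans y b c hy2 h2⟩)))
    · exact Or.inr (Or.inl (hlTrans a y c hy1 (hpl y b c (hlDom a y hy1).2 hy2 h2)))
    · exact Or.inr (Or.inl (hlTrans a y c hy1
        (hpl y u c (hlDom a y hy1).2 (hpTrans y b u hy2 hu1) hu2)))
    · exact Or.inr (Or.inr (Or.inr (Or.inl
        ⟨v, hlTrans a b v (hlTrans a y b hy1 (hlExt y b (hlDom a y hy1).2 (hlDom b v hv1).1 hy2)) hv1, hv2⟩)))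
    · exact Or.inr (Or.inr (Or.inr (Or.inl
        ⟨v, hlTrans a y v hy1 (hpl y u v (hlDom a y hy1).2 (hpTrans y b u hy2 hu) huv), hv⟩)))
    -- fifth: p a x, l x y, p y b
    · exact Or.inr (Or.inr (Or.inr (Or.inr ⟨x, y, hx, hxy, hpTrans y b c hy h2⟩)))
    · exact Or.inr (Or.inr (Or.inl
        ⟨x, hx, hlTrans x y c hxy (hpl y b c (hlDom x y hxy).2 hy h2)⟩))
    · exact Or.inr (Or.inr (Or.inl
        ⟨x, hx, hlTrans x y c hxy (hpl y u c (hlDom x y hxy).2 (hpTrans y b u hy hu1) hu2)⟩))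
    · exact Or.inr (Or.inr (Or.inr (Or.inr
        ⟨x, v, hx, hlTrans x b v (hlTrans x y b hxy
          (hlExt y b (hlDom x y hxy).2 (hlDom b v hv1).1 hy)) hv1, hv2⟩)))
    · exact Or.inr (Or.inr (Or.inr (Or.inr
        ⟨x, v, hx, hlTrans x y v hxy (hpl y u v (hlDom x y hxy).2 (hpTrans y b u hy hu) huv), hv⟩)))
  have hRirrefl : ∀ a, ¬ R a a := by
    intro a h
    rcases h with h | h | ⟨x, hx1, hx2⟩ | ⟨y, hy1, hy2⟩ | ⟨x, y, hx, hxy, hy⟩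
    · exact hpIrrefl a h
    · exact hlIrrefl a h
    · exact hlIrrefl x (hlTrans x a x hx2 (hlExt a x (hlDom x a hx2).2 (hlDom x a hx2).1 hx1))
    · exact hlIrrefl a (hlTrans a y a hy1 (hlExt y a (hlDom a y hy1).2 (hlDom a y hy1).1 hy2))
    · exact hlIrrefl x (hlTrans x y x hxy
        (hlExt y x (hlDom x y hxy).2 (hlDom x y hxy).1 (hpTrans y a x hy hx)))
  have hTG : ∀ a b, Relation.TransGen q a b → R a b := by
    intro a b h
    induction h with
    | single h => exact hRq _ _ h
    | tail _ h2 ih => exact hRtrans _ _ _ ih (hRq _ _ h2)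
  set r : T → T → Prop := fun a b => Relation.TransGen q a b with hr
  have hrIrrefl : ∀ a, ¬ r a a := fun a h => hRirrefl a (hTG a a h)
  set r' : T → T → Prop := fun a b => r a b ∨ a = b with hr'
  have : IsPartialOrder T r' := by
    refine { refl := fun a => Or.inr rfl, trans := ?_, antisymm := ?_ }
    · intro a b c hab hbc
      rcases hab with hab | rfl
      · rcases hbc with hbc | rfl
        · exact Or.inl (hab.trans hbc)
        · exact Or.inl hab
      · exact hbc
    · intro a b hab hba
      rcases hab with hab | rfl
      · rcases hba with hba | rfl
        · exact absurd (hab.trans hba) (hrIrrefl a)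
        · exact absurd hab (hrIrrefl _)
      · rfl
  obtain ⟨s, hs, hsub⟩ := extend_partialOrder r'
  haveI := hs
  refine ⟨fun a b => s a b ∧ a ≠ b, ?_, ?_, ?_, ?_, ?_⟩
  · intro a h; exact h.2 rfl
  · intro a b c h1 h2
    refine ⟨IsTrans.trans a b c h1.1 h2.1, ?_⟩
    rintro rfl
    exact h1.2 (Std.Antisymm.antisymm a b h1.1 h2.1)
  · intro a b hne
    rcases Std.Total.total (r := s) a b with h | h
    · exact Or.inl ⟨h, hne⟩
    · exact Or.inr ⟨h, hne.symm⟩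
  · intro a b h
    refine ⟨hsub _ _ (Or.inl (Relation.TransGen.single (Or.inl h))), ?_⟩
    rintro rfl; exact hpIrrefl a h
  · intro a b h
    refine ⟨hsub _ _ (Or.inl (Relation.TransGen.single (Or.inr h))), ?_⟩
    rintro rfl; exact hlIrrefl a h
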